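/- arXiv:2006.03579 — 3 statements merged into one kernel-verified Lean document; each statement's English description precedes it below -/
import Mathlib

section
/- Let (X, μ) be a measure space, let g, h : X → [0, ∞) be measurable, let s > 1 be real, and let k, i be integers with 0 < k < i. If ∫_X g dμ and ∫_X g·h^{s^i − 1} dμ are finite, then (∫_X g·h^{s^k − 1} dμ)^{1/s^k} ≤ ∫_X g dμ + (∫_X g·h^{s^i − 1} dμ)^{1/s^i}. -/
open MeasureTheory

theorem stmt_5 {X : Type*} [MeasurableSpace X] (μ : Measure X) (g h : X → ℝ)
    (hg : Measurable g) (hh : Measurable h) (hg0 : ∀ x, 0 ≤ g x) (hh0 : ∀ x, 0 ≤ h x)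
    (s : ℝ) (hs : 1 < s) (k i : ℕ) (hk : 0 < k) (hki : k < i)
    (hint1 : Integrable g μ)
    (hint2 : Integrable (fun x => g x * h x ^ (s ^ i - 1)) μ) :
    (∫ x, g x * h x ^ (s ^ k - 1) ∂μ) ^ (1 / s ^ k) ≤
      (∫ x, g x ∂μ) + (∫ x, g x * h x ^ (s ^ i - 1) ∂μ) ^ (1 / s ^ i) := by
  have hs0 : (0 : ℝ) < s := lt_trans one_pos hs
  set P : ℝ := s ^ k with hPdef
  set Q : ℝ := s ^ i with hQdef
  have hP1 : 1 < P := one_lt_pow₀ hs hk.ne'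
  have hQ1 : 1 < Q := one_lt_pow₀ hs (by omega)
  have hPQ : P < Q := pow_lt_pow_right₀ hs hki
  have hP0 : (0 : ℝ) < P := lt_trans one_pos hP1
  have hQ0 : (0 : ℝ) < Q := lt_trans one_pos hQ1
  set p : ℝ := (Q - 1) / (P - 1) with hpdef
  have hP1' : (0 : ℝ) < P - 1 := by linarith
  have hQ1' : (0 : ℝ) < Q - 1 := by linarith
  have hp1 : 1 < p := (one_lt_div hP1').2 (by linarith)
  have hp0 : (0 : ℝ) < p := lt_trans one_pos hp1
  set q : ℝ := p / (p - 1) with hqdef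
  have hpq : p.HolderConjugate q := Real.HolderConjugate.conjExponent hp1
  have hq0 : (0 : ℝ) < q := hpq.symm.pos
  -- the two factor functions
  set F : X → ℝ := fun x => g x ^ (1 / p) * h x ^ (P - 1) with hFdef
  set G : X → ℝ := fun x => g x ^ (1 / q) with hGdef
  have hF0 : ∀ x, 0 ≤ F x := fun x =>
    mul_nonneg (Real.rpow_nonneg (hg0 x) _) (Real.rpow_nonneg (hh0 x) _)
  have hG0 : ∀ x, 0 ≤ G x := fun x => Real.rpow_nonneg (hg0 x) _
  have hFm : Measurable F := by fun_prop
  have hGm : Measurable G := by fun_prop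
  -- F ^ p = g * h ^ (Q - 1)
  have hFp : ∀ x, F x ^ p = g x * h x ^ (Q - 1) := by
    intro x
    have h1' : (g x ^ (1 / p)) ^ p = g x := by
      rw [← Real.rpow_mul (hg0 x), one_div, inv_mul_cancel₀ hp0.ne', Real.rpow_one]
    have h2 : (h x ^ (P - 1)) ^ p = h x ^ (Q - 1) := by
      rw [← Real.rpow_mul (hh0 x)]
      congr 1
      rw [hpdef]
      field_simp
    rw [hFdef]
    simp only
    rw [Real.mul_rpow (Real.rpow_nonneg (hg0 x) _) (Real.rpow_nonneg (hh0 x) _), h1', h2]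
  have hGq : ∀ x, G x ^ q = g x := by
    intro x
    rw [hGdef]
    simp only
    rw [← Real.rpow_mul (hg0 x), one_div, inv_mul_cancel₀ hq0.ne', Real.rpow_one]
  -- Memℒp facts
  have hFs : AEStronglyMeasurable F μ := hFm.aestronglyMeasurable
  have hGs : AEStronglyMeasurable G μ := hGm.aestronglyMeasurable
  have hFmem : MemLp F (ENNReal.ofReal p) μ := by
    rw [← memLp_norm_rpow_iff (q := ENNReal.ofReal p) hFs
      (by simp [hp0]) (by simp)]
    rw [ENNReal.div_self (by simp [hp0]) (by simp)]
    rw [memLp_one_iff_integrable]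
    refine hint2.congr ?_
    filter_upwards with x
    rw [ENNReal.toReal_ofReal hp0.le, Real.norm_of_nonneg (hF0 x), hFp x]
  have hGmem : MemLp G (ENNReal.ofReal q) μ := by
    rw [← memLp_norm_rpow_iff (q := ENNReal.ofReal q) hGs
      (by simp [hq0]) (by simp)]
    rw [ENNReal.div_self (by simp [hq0]) (by simp)]
    rw [memLp_one_iff_integrable]
    refine hint1.congr ?_
    filter_upwards with x
    rw [ENNReal.toReal_ofReal hq0.le, Real.norm_of_nonneg (hG0 x), hGq x]
  -- Hölder
  have holder := integral_mul_le_Lp_mul_Lq_of_nonneg hpq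
    (Filter.Eventually.of_forall hF0) (Filter.Eventually.of_forall hG0) hFmem hGmem
  -- rewrite the three integrals
  have hFG : ∀ x, F x * G x = g x * h x ^ (P - 1) := by
    intro x
    rw [hFdef, hGdef]
    simp only
    have : g x ^ (1 / p) * g x ^ (1 / q) = g x := by
      rw [← Real.rpow_add' (hg0 x) (by simp only [one_div]; rw [hpq.inv_add_inv_eq_one]; norm_num)]
      rw [show 1 / p + 1 / q = 1 by simpa [one_div] using hpq.inv_add_inv_eq_one]
      exact Real.rpow_one _
    calc g x ^ (1 / p) * h x ^ (P - 1) * g x ^ (1 / q)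
        = g x ^ (1 / p) * g x ^ (1 / q) * h x ^ (P - 1) := by ring
      _ = g x * h x ^ (P - 1) := by rw [this]
  rw [integral_congr_ae (Filter.Eventually.of_forall hFG),
    integral_congr_ae (Filter.Eventually.of_forall hFp),
    integral_congr_ae (Filter.Eventually.of_forall hGq)] at holder
  -- abbreviations
  set A : ℝ := ∫ x, g x ∂μ with hAdef
  set B : ℝ := ∫ x, g x * h x ^ (Q - 1) ∂μ with hBdef
  set C : ℝ := ∫ x, g x * h x ^ (P - 1) ∂μ with hCdef
  have hA0 : 0 ≤ A := integral_nonneg hg0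
  have hB0 : 0 ≤ B := integral_nonneg fun x =>
    mul_nonneg (hg0 x) (Real.rpow_nonneg (hh0 x) _)
  have hC0 : 0 ≤ C := integral_nonneg fun x =>
    mul_nonneg (hg0 x) (Real.rpow_nonneg (hh0 x) _)
  -- raise Hölder to the power 1/P
  have step1 : C ^ (1 / P) ≤ (B ^ (1 / p) * A ^ (1 / q)) ^ (1 / P) :=
    Real.rpow_le_rpow hC0 holder (by positivity)
  set u : ℝ := 1 / q * (1 / P) with hudef
  set v : ℝ := Q * (1 / p * (1 / P)) with hvdef
  have hu0 : 0 ≤ u := by positivity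
  have hv0 : 0 ≤ v := by positivity
  have huv : u + v = 1 := by
    have hq_eq : 1 / q = 1 - 1 / p := by
      have := hpq.inv_add_inv_eq_one
      rw [one_div, one_div]; linarith [this]
    rw [hudef, hvdef, hq_eq, hpdef]
    field_simp
    ring
  have step2 : (B ^ (1 / p) * A ^ (1 / q)) ^ (1 / P)
      = (B ^ (1 / Q)) ^ v * A ^ u := by
    rw [Real.mul_rpow (Real.rpow_nonneg hB0 _) (Real.rpow_nonneg hA0 _),
      ← Real.rpow_mul hB0, ← Real.rpow_mul hA0, ← Real.rpow_mul hB0]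
    congr 2
    rw [hvdef]
    field_simp
  have step3 : (B ^ (1 / Q)) ^ v * A ^ u ≤ v * (B ^ (1 / Q)) + u * A := by
    exact Real.geom_mean_le_arith_mean2_weighted hv0 hu0
      (Real.rpow_nonneg hB0 (1 / Q)) hA0 (by linarith [huv])
  have hu1 : u ≤ 1 := by linarith
  have hv1 : v ≤ 1 := by linarith
  have step4 : v * (B ^ (1 / Q)) + u * A ≤ A + B ^ (1 / Q) := by
    have h1 : v * (B ^ (1 / Q)) ≤ B ^ (1 / Q) :=
      mul_le_of_le_one_left (Real.rpow_nonneg hB0 _) hv1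
    have h2 : u * A ≤ A := mul_le_of_le_one_left hA0 hu1
    linarith
  calc C ^ (1 / P) ≤ (B ^ (1 / p) * A ^ (1 / q)) ^ (1 / P) := step1
    _ = (B ^ (1 / Q)) ^ v * A ^ u := step2
    _ ≤ v * (B ^ (1 / Q)) + u * A := step3
    _ ≤ A + B ^ (1 / Q) := step4
end

section
/- Let M > 0, ℓ ≥ 0, and let r : I → (2M, ∞), w : I → ℝ be differentiable with r' = w and w' = (r − 3M)ℓ²/r⁴. Let k > 0 be a constant with k² = w² + (1 − 2M/r)ℓ²/r² on I (so this holds at one point, hence everywhere by conservation). Set v_u = (−k − w)/2 and v_u̲ = (−k + w)/2, so v_u, v_u̲ ≤ 0. Then for all s ∈ I: d/ds [ 2|v_u| / (1 − 2M/r) ] = −(4M/r²)·|v_u|²/(1 − 2M/r)² + (4/r)·|v_u̲|·|v_u|/(1 − 2M/r), and d/ds [ (1 − 2M/r)·k ] = (2M/r²)·(|v_u|² − |v_u̲|²). -/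
theorem stmt_12 (M ℓ k : ℝ) (hM : 0 < M) (hℓ : 0 ≤ ℓ) (hk : 0 < k)
    (I : Set ℝ) (hI : Convex ℝ I) (r w : ℝ → ℝ)
    (hr2M : ∀ s ∈ I, 2 * M < r s)
    (hr : ∀ s ∈ I, HasDerivWithinAt r (w s) I s)
    (hw : ∀ s ∈ I, HasDerivWithinAt w ((r s - 3 * M) * ℓ ^ 2 / (r s) ^ 4) I s)
    (hcons : ∀ s ∈ I, k ^ 2 = (w s) ^ 2 + (1 - 2 * M / r s) * ℓ ^ 2 / (r s) ^ 2) :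
    ∀ s ∈ I,
      HasDerivWithinAt (fun t => 2 * |(-k - w t) / 2| / (1 - 2 * M / r t))
        (-(4 * M / (r s) ^ 2) * |(-k - w s) / 2| ^ 2 / (1 - 2 * M / r s) ^ 2
          + 4 / r s * (|(-k + w s) / 2| * |(-k - w s) / 2|) / (1 - 2 * M / r s)) I s ∧
      HasDerivWithinAt (fun t => (1 - 2 * M / r t) * k)
        (2 * M / (r s) ^ 2 * (|(-k - w s) / 2| ^ 2 - |(-k + w s) / 2| ^ 2)) I s := by
  -- basic facts valid on all of I
  have hr0 : ∀ t ∈ I, (0:ℝ) < r t := fun t ht => by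
    have := hr2M t ht; linarith
  have hwk : ∀ t ∈ I, -k ≤ w t ∧ w t ≤ k := by
    intro t ht
    have h1 := hcons t ht
    have hrt := hr2M t ht
    have hrt0 := hr0 t ht
    have hpos : 0 ≤ (1 - 2 * M / r t) * ℓ ^ 2 / (r t) ^ 2 := by
      have h2 : 2 * M / r t < 1 := by rw [div_lt_one hrt0]; linarith
      have : (0:ℝ) ≤ 1 - 2 * M / r t := by linarith
      positivity
    have hsq : (w t) ^ 2 ≤ k ^ 2 := by nlinarith
    constructor <;> nlinarith
  have habs1 : ∀ t ∈ I, |(-k - w t) / 2| = (k + w t) / 2 := by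
    intro t ht
    have := (hwk t ht).1
    rw [abs_of_nonpos (by linarith)]; ring
  have habs2 : ∀ t ∈ I, |(-k + w t) / 2| = (k - w t) / 2 := by
    intro t ht
    have := (hwk t ht).2
    rw [abs_of_nonpos (by linarith)]; ring
  intro s hs
  have hrs := hr2M s hs
  have hrs0 := hr0 s hs
  have hrsne : r s ≠ 0 := ne_of_gt hrs0
  have hus : (0:ℝ) < 1 - 2 * M / r s := by
    have : 2 * M / r s < 1 := by rw [div_lt_one hrs0]; linarith
    linarith
  have husne : (1 : ℝ) - 2 * M / r s ≠ 0 := ne_of_gt hus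
  -- derivative of the metric factor
  have hu : HasDerivWithinAt (fun t => 1 - 2 * M / r t) (2 * M * w s / (r s) ^ 2) I s := by
    have h1 : HasDerivWithinAt (fun t => 2 * M / r t)
        ((0 * r s - 2 * M * w s) / (r s) ^ 2) I s :=
      (hasDerivWithinAt_const s I (2 * M)).div (hr s hs) hrsne
    have h2 := (hasDerivWithinAt_const s I (1:ℝ)).sub h1
    convert h2 using 1
    · rfl
    · rfl
    · rfl
    field_simp
    ring
  constructor
  · -- first derivative
    have hnum : HasDerivWithinAt (fun t => k + w t)
        ((r s - 3 * M) * ℓ ^ 2 / (r s) ^ 4) I s := by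
      exact (hw s hs).const_add k
    have hf : HasDerivWithinAt (fun t => (k + w t) / (1 - 2 * M / r t))
        (((r s - 3 * M) * ℓ ^ 2 / (r s) ^ 4 * (1 - 2 * M / r s)
          - (k + w s) * (2 * M * w s / (r s) ^ 2)) / (1 - 2 * M / r s) ^ 2) I s :=
      hnum.div hu husne
    have heq : ∀ t ∈ I, (fun t => 2 * |(-k - w t) / 2| / (1 - 2 * M / r t)) t
        = (k + w t) / (1 - 2 * M / r t) := by
      intro t ht
      simp only [habs1 t ht]
      ring
    have hcongr := hf.congr heq (heq s hs)
    convert hcongr using 1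
    · rfl
    · rfl
    rw [habs1 s hs, habs2 s hs]
    have hc := hcons s hs
    have hrm : r s - 2 * M ≠ 0 := ne_of_gt (by linarith)
    have hc' : k ^ 2 * r s ^ 3 = w s ^ 2 * r s ^ 3 + (r s - 2 * M) * ℓ ^ 2 := by
      have h3 : (r s)^3 ≠ 0 := pow_ne_zero 3 hrsne
      field_simp at hc
      linarith
    have hu' : 1 - 2 * M / r s = (r s - 2 * M) / r s := by field_simp
    rw [hu']
    field_simp
    congr 1
    linear_combination (4 * (r s - 3*M)) * hc'
  · -- second derivative
    have hg := hu.mul_const k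
    convert hg using 1
    · rfl
    · rfl
    rw [habs1 s hs, habs2 s hs]
    ring
end

section
/- Let M > 0, ℓ ≥ 0, k > 0, and let r : I → (2M, ∞), w : I → ℝ be differentiable with r' = w, w' = (r − 3M)ℓ²/r⁴ and k² = w² + (1 − 2M/r)ℓ²/r² on I. Set v_u̲ = (−k + w)/2 ≤ 0 and v_t = −k. Then for any real p, q with 0 ≤ p ≤ 2q, the function F = r^p·(|v_u̲|/k)^q satisfies, wherever v_u̲ < 0: −F' = p·r^{p−1}·|v_u̲|^{q+1}/k^q + (1/4)(2q − p)·r^{p−1}·(|v_u̲|^{q−1}/k^q)·(ℓ²/r²) − (3q − p)·(M/2)·r^{p−2}·(|v_u̲|^{q−1}/k^q)·(ℓ²/r²). -/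
theorem stmt_13 (M ℓ k p q : ℝ) (hM : 0 < M) (hℓ : 0 ≤ ℓ) (hk : 0 < k)
    (hp : 0 ≤ p) (hpq : p ≤ 2 * q)
    (I : Set ℝ) (hI : Convex ℝ I) (r w : ℝ → ℝ)
    (hr2M : ∀ s ∈ I, 2 * M < r s)
    (hr : ∀ s ∈ I, HasDerivWithinAt r (w s) I s)
    (hw : ∀ s ∈ I, HasDerivWithinAt w ((r s - 3 * M) * ℓ ^ 2 / (r s) ^ 4) I s)
    (hcons : ∀ s ∈ I, k ^ 2 = (w s) ^ 2 + (1 - 2 * M / r s) * ℓ ^ 2 / (r s) ^ 2) :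
    ∀ s ∈ I, (-k + w s) / 2 < 0 →
      HasDerivWithinAt (fun t => (r t) ^ p * (|(-k + w t) / 2| / k) ^ q)
        (-(p * (r s) ^ (p - 1) * |(-k + w s) / 2| ^ (q + 1) / k ^ q
          + 1 / 4 * (2 * q - p) * (r s) ^ (p - 1) *
            (|(-k + w s) / 2| ^ (q - 1) / k ^ q) * (ℓ ^ 2 / (r s) ^ 2)
          - (3 * q - p) * (M / 2) * (r s) ^ (p - 2) *
            (|(-k + w s) / 2| ^ (q - 1) / k ^ q) * (ℓ ^ 2 / (r s) ^ 2))) I s := by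
  intro s hs hneg
  have hrpos : (0:ℝ) < r s := lt_trans (by linarith) (hr2M s hs)
  have hws : w s < k := by linarith
  have hv : (0:ℝ) < (k - w s) / 2 := by linarith
  have hgpos : (0:ℝ) < ((k - w s) / 2) / k := div_pos hv hk
  -- derivative of the modified function
  have hg : HasDerivWithinAt (fun t => ((k - w t) / 2) / k)
      ((-((r s - 3 * M) * ℓ ^ 2 / (r s) ^ 4) / 2) / k) I s :=
    (((hw s hs).const_sub k).div_const 2).div_const k
  have hgq : HasDerivWithinAt (fun t => (((k - w t) / 2) / k) ^ q)
      ((-((r s - 3 * M) * ℓ ^ 2 / (r s) ^ 4) / 2 / k) * q * (((k - w s) / 2) / k) ^ (q - 1)) I s :=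
    hg.rpow_const (Or.inl hgpos.ne')
  have hrp : HasDerivWithinAt (fun t => (r t) ^ p) (w s * p * (r s) ^ (p - 1)) I s :=
    (hr s hs).rpow_const (Or.inl hrpos.ne')
  have hG := hrp.mul hgq
  have hEq : (fun t => (r t) ^ p * (|(-k + w t) / 2| / k) ^ q)
      =ᶠ[nhdsWithin s I] (fun t => (r t) ^ p * (((k - w t) / 2) / k) ^ q) := by
    have hcw : ContinuousWithinAt w I s := (hw s hs).continuousWithinAt
    have hev : ∀ᶠ t in nhdsWithin s I, w t < k := hcw (Iio_mem_nhds hws)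
    filter_upwards [hev] with t ht
    have h1 : (-k + w t) / 2 < 0 := by linarith
    rw [abs_of_neg h1]
    have h2 : -((-k + w t) / 2) = (k - w t) / 2 := by ring
    rw [h2]
  have hEqs : (r s) ^ p * (|(-k + w s) / 2| / k) ^ q
      = (r s) ^ p * (((k - w s) / 2) / k) ^ q := by
    rw [abs_of_neg hneg]
    have h2 : -((-k + w s) / 2) = (k - w s) / 2 := by ring
    rw [h2]
  have hmain := hG.congr_of_eventuallyEq hEq hEqs
  refine hmain.congr_deriv ?_
  symm
  -- now pure algebra
  rw [abs_of_neg hneg]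
  set v : ℝ := (k - w s) / 2 with hvdef
  have hvn : -((-k + w s) / 2) = v := by rw [hvdef]; ring
  rw [hvn]
  set R : ℝ := r s with hRdef
  have hRne : R ≠ 0 := hrpos.ne'
  have hkne : k ≠ 0 := hk.ne'
  have hvne : v ≠ 0 := hv.ne'
  have hkq : (0:ℝ) < k ^ q := Real.rpow_pos_of_pos hk q
  have hvq : (0:ℝ) < v ^ q := Real.rpow_pos_of_pos hv q
  have hRp : (0:ℝ) < R ^ p := Real.rpow_pos_of_pos hrpos p
  have key : (k - w s) * (k + w s) = (1 - 2 * M / R) * ℓ ^ 2 / R ^ 2 := by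
    have := hcons s hs
    linear_combination this
  have e1 : R ^ (p - 1) = R ^ p / R := by
    rw [Real.rpow_sub hrpos, Real.rpow_one]
  have e2 : R ^ (p - 2) = R ^ p / R ^ 2 := by
    rw [Real.rpow_sub hrpos]
    norm_num [Real.rpow_two]
  have e3 : v ^ (q + 1) = v ^ q * v := by
    rw [Real.rpow_add hv, Real.rpow_one]
  have e4 : v ^ (q - 1) = v ^ q / v := by
    rw [Real.rpow_sub hv, Real.rpow_one]
  have e5 : (v / k) ^ q = v ^ q / k ^ q := Real.div_rpow hv.le hk.le q
  have e6 : (v / k) ^ (q - 1) = (v ^ q / v) / (k ^ q / k) := by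
    rw [Real.div_rpow hv.le hk.le, Real.rpow_sub hv, Real.rpow_sub hk, Real.rpow_one,
      Real.rpow_one]
  clear_value v R
  have hwv : w s = k - 2 * v := by rw [hvdef]; ring
  rw [hwv] at key
  have key2 : 4 * (v * (k - v)) = (1 - 2 * M / R) * ℓ ^ 2 / R ^ 2 := by
    linear_combination key
  have key3 : 4 * v * (k - v) * R ^ 3 = (R - 2 * M) * ℓ ^ 2 := by
    field_simp at key2
    linarith [key2]
  rw [e1, e2, e3, e4, e5, e6, hwv]
  field_simp
  ring_nf
  linear_combination (-2 * p) * key3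
end
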